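/- arXiv:1203.6262 — 4 statements merged into one kernel-verified Lean document; each statement's English description precedes it below -/
import Mathlib

section
/- Let A ∈ M₃⊗M₃ be separable. Then P[A] ⊆ Q[A]; that is, every product vector z = x⊗y whose rank-one projection zz* lies in the smallest face V₁[A] satisfies x⊗y ∈ range A and x̄⊗y ∈ range A^Γ. -/
open Matrix BigOperators
open scoped ComplexOrder

/-- Index set for `M₃ ⊗ M₃ ≅ M₉`: pairs `(i,k)` with `i,k ∈ Fin 3`. -/
abbrev Idx : Type := Fin 3 × Fin 3

/-- `M₃ ⊗ M₃`, identified with 9×9 complex matrices. -/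
abbrev M9 : Type := Matrix Idx Idx ℂ

/-- Vectors in `ℂ³ ⊗ ℂ³ ≅ ℂ⁹`. -/
abbrev V9 : Type := Idx → ℂ

/-- The product vector `x ⊗ y`, with entries `(x⊗y)(i,k) = x i * y k`. -/
def prodVec (x y : Fin 3 → ℂ) : V9 := fun p => x p.1 * y p.2

/-- Entrywise complex conjugate of a vector in `ℂ³`. -/
def conjVec (x : Fin 3 → ℂ) : Fin 3 → ℂ := fun i => (starRingEnd ℂ) (x i)

/-- The rank-one matrix `z z*`. -/
def rankOne (z : V9) : M9 := Matrix.vecMulVec z (fun p => (starRingEnd ℂ) (z p))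

/-- The partial transpose: `A^Γ((i,k),(j,l)) = A((j,k),(i,l))`. -/
def ptrans (A : M9) : M9 := fun p q => A (q.1, p.2) (p.1, q.2)

/-- The range of a matrix `A`, as a subspace of `ℂ⁹`. -/
noncomputable def MatRange (A : M9) : Submodule ℂ V9 := LinearMap.range A.mulVecLin

/-- `A` is separable: a finite sum of `(x⊗y)(x⊗y)*` over product vectors. -/
def IsSep (A : M9) : Prop :=
  ∃ (n : ℕ) (x y : Fin n → Fin 3 → ℂ),
    A = ∑ ι : Fin n, rankOne (prodVec (x ι) (y ι))

/-- The convex cone `V₁` of all separable matrices. -/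
def V1 : Set M9 := {A | IsSep A}

/-- `A` is PPT: both `A` and `A^Γ` are positive semidefinite. -/
def IsPPT (A : M9) : Prop := A.PosSemidef ∧ (ptrans A).PosSemidef

/-- The convex cone `𝕋` of all PPT matrices. -/
def Tcone : Set M9 := {A | IsPPT A}

/-- `F` is a face of the convex set `C`. -/
def IsFaceOf (F C : Set M9) : Prop :=
  F ⊆ C ∧ Convex ℝ F ∧
    ∀ x ∈ C, ∀ y ∈ C, ∀ t : ℝ, 0 < t → t < 1 →
      (1 - t) • x + t • y ∈ F → x ∈ F ∧ y ∈ F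

/-- The smallest face of `C` containing `A`. -/
def smallestFace (C : Set M9) (A : M9) : Set M9 := ⋂₀ {F | IsFaceOf F C ∧ A ∈ F}

/-- `P[A]`: product vectors `z` with `z z* ∈ V₁[A]`. -/
def Pvecs (A : M9) : Set V9 :=
  {z | (∃ x y : Fin 3 → ℂ, z = prodVec x y) ∧ rankOne z ∈ smallestFace V1 A}

/-- `Q[A]`: product vectors `x⊗y` with `x⊗y ∈ range A` and `x̄⊗y ∈ range A^Γ`. -/
def Qvecs (A : M9) : Set V9 :=
  {z | ∃ x y : Fin 3 → ℂ, z = prodVec x y ∧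
    prodVec x y ∈ MatRange A ∧ prodVec (conjVec x) y ∈ MatRange (ptrans A)}

/-- The face `𝕋[A]` of the PPT cone determined by `A`. -/
def TFace (A : M9) : Set M9 :=
  {B | IsPPT B ∧ MatRange B ≤ MatRange A ∧ MatRange (ptrans B) ≤ MatRange (ptrans A)}

/-- `x` is an interior point of the convex set `C`. -/
def IsInteriorPt (x : M9) (C : Set M9) : Prop :=
  x ∈ C ∧ ∀ y ∈ C, ∃ t : ℝ, 1 < t ∧ (1 - t) • y + t • x ∈ C

/-- The matrix `A[a,b,c]` of the paper. -/
def Amat (a b c : ℝ) : M9 := fun p q =>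
  if p = q then
    (if p.1 = p.2 then (a : ℂ) else if p.2 = p.1 + 1 then (c : ℂ) else (b : ℂ))
  else if p.1 = p.2 ∧ q.1 = q.2 then 1 else 0

section Aux

open scoped InnerProductSpace

/-- `rankOne z *ᵥ w = (star z ⬝ᵥ w) • z`. -/
lemma rankOne_mulVec (z w : V9) : rankOne z *ᵥ w = (star z ⬝ᵥ w) • z := by
  funext p
  simp only [rankOne, mulVec, dotProduct, vecMulVec_apply, Pi.smul_apply, smul_eq_mul,
    Finset.sum_mul, Pi.star_apply, starRingEnd_apply]
  exact Finset.sum_congr rfl fun j _ => by ring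

lemma self_mem_matRange_rankOne (z : V9) : z ∈ MatRange (rankOne z) := by
  by_cases hz : z = 0
  · subst hz; exact Submodule.zero_mem _
  · have hnz : star z ⬝ᵥ z ≠ 0 := fun h => hz (dotProduct_star_self_eq_zero.mp h)
    refine ⟨(star z ⬝ᵥ z)⁻¹ • z, ?_⟩
    rw [Matrix.mulVecLin_apply, rankOne_mulVec, dotProduct_smul, smul_eq_mul,
      inv_mul_cancel₀ hnz, one_smul]

lemma rankOne_posSemidef (z : V9) : (rankOne z).PosSemidef := by
  refine .of_dotProduct_mulVec_nonneg ?_ ?_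
  · ext p q
    simp only [rankOne, Matrix.conjTranspose_apply, vecMulVec_apply, star_mul', starRingEnd_apply,
      star_star]
    ring
  · intro x
    have h : star x ⬝ᵥ rankOne z *ᵥ x = (star z ⬝ᵥ x) * star (star z ⬝ᵥ x) := by
      rw [rankOne_mulVec, dotProduct_smul, smul_eq_mul]
      congr 1
      simp only [dotProduct, star_sum, star_mul', Pi.star_apply, star_star, Finset.mul_sum]
      exact Finset.sum_congr rfl fun j _ => by ring
    rw [h]
    exact mul_star_self_nonneg _

lemma IsSep.posSemidef {A : M9} (h : IsSep A) : A.PosSemidef := by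
  obtain ⟨n, x, y, rfl⟩ := h
  exact Finset.sum_induction _ _ (fun a b ha hb => ha.add hb)
    Matrix.PosSemidef.zero (fun i _ => rankOne_posSemidef _)

lemma IsSep.add {A B : M9} (hA : IsSep A) (hB : IsSep B) : IsSep (A + B) := by
  obtain ⟨n, x, y, rfl⟩ := hA
  obtain ⟨m, u, v, rfl⟩ := hB
  refine ⟨n + m, Fin.append x u, Fin.append y v, ?_⟩
  rw [Fin.sum_univ_add]
  congr 1 <;> exact (Finset.sum_congr rfl fun i _ => by
    simp [Fin.append_left, Fin.append_right]).symm

lemma IsSep.smulR {A : M9} (hA : IsSep A) {r : ℝ} (hr : 0 ≤ r) : IsSep (r • A) := by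
  obtain ⟨n, x, y, rfl⟩ := hA
  refine ⟨n, fun ι => fun i => (Real.sqrt r : ℂ) * x ι i, y, ?_⟩
  rw [Finset.smul_sum]
  refine Finset.sum_congr rfl fun ι _ => ?_
  have h : ((Real.sqrt r : ℂ)) * (Real.sqrt r : ℂ) = (r : ℂ) := by
    rw [← Complex.ofReal_mul, Real.mul_self_sqrt hr]
  ext p q
  simp only [Matrix.smul_apply, rankOne, vecMulVec_apply, prodVec, _root_.map_mul, Complex.real_smul,
    Complex.conj_ofReal]
  linear_combination (x ι p.1 * y ι p.2 * (starRingEnd ℂ) (x ι q.1) * (starRingEnd ℂ) (y ι q.2)) * h.symm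

lemma realSmul_eq (r : ℝ) (B : M9) : r • B = (r : ℂ) • B :=
  (algebraMap_smul ℂ r B).symm

lemma matRange_add_le (B C : M9) : MatRange (B + C) ≤ MatRange B ⊔ MatRange C := by
  rintro _ ⟨u, rfl⟩
  rw [Matrix.mulVecLin_apply, Matrix.add_mulVec]
  exact Submodule.add_mem_sup ⟨u, rfl⟩ ⟨u, rfl⟩

lemma matRange_smul_le (c : ℂ) (B : M9) : MatRange (c • B) ≤ MatRange B := by
  rintro _ ⟨u, rfl⟩
  exact ⟨c • u, by rw [Matrix.mulVecLin_apply, Matrix.mulVecLin_apply,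
    Matrix.smul_mulVec, Matrix.mulVec_smul]⟩

lemma matRange_smul_eq {c : ℂ} (hc : c ≠ 0) (B : M9) : MatRange (c • B) = MatRange B := by
  refine le_antisymm (matRange_smul_le c B) ?_
  have hB : B = c⁻¹ • (c • B) := by rw [smul_smul, inv_mul_cancel₀ hc, one_smul]
  conv_lhs => rw [hB]
  exact matRange_smul_le _ _

noncomputable def eqvE : EuclideanSpace ℂ Idx ≃ₗ[ℂ] V9 := WithLp.linearEquiv 2 ℂ (Idx → ℂ)

lemma inner_eqvE (w v : EuclideanSpace ℂ Idx) :
    (inner ℂ w v : ℂ) = star (eqvE w) ⬝ᵥ (eqvE v) := by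
  rw [PiLp.inner_apply]
  simp only [RCLike.inner_apply', dotProduct, Pi.star_apply, starRingEnd_apply]
  rfl

lemma comap_matRange_eq (M : M9) (hM : M.IsHermitian) :
    (MatRange M).comap eqvE.toLinearMap
      = ((LinearMap.ker M.mulVecLin).comap eqvE.toLinearMap)ᗮ := by
  set K := (LinearMap.ker M.mulVecLin).comap eqvE.toLinearMap with hK
  have hle : (MatRange M).comap eqvE.toLinearMap ≤ Kᗮ := by
    rintro v hv
    obtain ⟨u, hu⟩ := hv
    rw [Submodule.mem_orthogonal]
    intro w hw
    have hw' : M *ᵥ eqvE w = 0 := hw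
    have hu2 : (eqvE v : V9) = M *ᵥ u := hu.symm
    have h1 : (inner ℂ w v : ℂ) = star (eqvE w) ⬝ᵥ M *ᵥ u := by
      rw [inner_eqvE, hu2]
    have h2 : star (eqvE w) ᵥ* M = 0 := by
      calc star (eqvE w) ᵥ* M = star (eqvE w) ᵥ* Mᴴ := by rw [hM.eq]
        _ = star (M *ᵥ eqvE w) := (Matrix.star_mulVec M (eqvE w)).symm
        _ = 0 := by rw [hw', star_zero]
    rw [h1, Matrix.dotProduct_mulVec, h2, zero_dotProduct]
  refine Submodule.eq_of_le_of_finrank_le hle ?_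
  have hr : Module.finrank ℂ ((MatRange M).comap eqvE.toLinearMap)
      = Module.finrank ℂ (MatRange M) := by
    rw [Submodule.comap_equiv_eq_map_symm]
    exact LinearEquiv.finrank_map_eq _ _
  have hk : Module.finrank ℂ K = Module.finrank ℂ (LinearMap.ker M.mulVecLin) := by
    rw [hK, Submodule.comap_equiv_eq_map_symm]
    exact LinearEquiv.finrank_map_eq _ _
  have hrn := LinearMap.finrank_range_add_finrank_ker M.mulVecLin
  have hoo := Submodule.finrank_add_finrank_orthogonal K
  have hEV : Module.finrank ℂ (EuclideanSpace ℂ Idx) = Module.finrank ℂ V9 :=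
    eqvE.finrank_eq
  have hbd : Module.finrank ℂ V9 = Module.finrank ℂ (Idx → ℂ) := rfl
  have hMR : Module.finrank ℂ (MatRange M)
      = Module.finrank ℂ (LinearMap.range M.mulVecLin) := rfl
  rw [hr]
  omega

lemma matRange_le_add {B C : M9} (hB : B.PosSemidef) (hC : C.PosSemidef) :
    MatRange B ≤ MatRange (B + C) := by
  have hker : LinearMap.ker (B + C).mulVecLin ≤ LinearMap.ker B.mulVecLin := by
    intro u hu
    have hu' : (B + C) *ᵥ u = 0 := hu
    have hq : star u ⬝ᵥ B *ᵥ u + star u ⬝ᵥ C *ᵥ u = 0 := by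
      rw [← dotProduct_add, ← Matrix.add_mulVec, hu', dotProduct_zero]
    have h0 := (add_eq_zero_iff_of_nonneg (hB.dotProduct_mulVec_nonneg u) (hC.dotProduct_mulVec_nonneg u)).mp hq
    exact (hB.dotProduct_mulVec_zero_iff u).mp h0.1
  rw [← Submodule.comap_le_comap_iff_of_surjective
    (f := eqvE.toLinearMap) eqvE.surjective,
    comap_matRange_eq B hB.1, comap_matRange_eq (B + C) (hB.add hC).1]
  exact Submodule.orthogonal_le (Submodule.comap_mono hker)

lemma ptrans_add (B C : M9) : ptrans (B + C) = ptrans B + ptrans C := rfl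

lemma ptrans_smulR (r : ℝ) (B : M9) : ptrans (r • B) = r • ptrans B := rfl

lemma ptrans_sum {n : ℕ} (f : Fin n → M9) : ptrans (∑ i, f i) = ∑ i, ptrans (f i) := by
  ext p q
  simp [ptrans, Matrix.sum_apply]

lemma ptrans_rankOne (x y : Fin 3 → ℂ) :
    ptrans (rankOne (prodVec x y)) = rankOne (prodVec (conjVec x) y) := by
  ext p q
  simp only [ptrans, rankOne, vecMulVec_apply, prodVec, conjVec, _root_.map_mul, Complex.conj_conj]
  ring

lemma IsSep.ptrans {A : M9} (hA : IsSep A) : IsSep (ptrans A) := by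
  obtain ⟨n, x, y, rfl⟩ := hA
  refine ⟨n, fun ι => conjVec (x ι), y, ?_⟩
  rw [ptrans_sum]
  exact Finset.sum_congr rfl fun ι _ => ptrans_rankOne _ _

/-- The face of `V₁` given by range conditions relative to `A`. -/
def Fface (A : M9) : Set M9 :=
  {B | IsSep B ∧ MatRange B ≤ MatRange A ∧ MatRange (ptrans B) ≤ MatRange (ptrans A)}

lemma fface_isFaceOf (A : M9) : IsFaceOf (Fface A) V1 := by
  refine ⟨fun B hB => hB.1, ?_, ?_⟩
  · -- convexity
    intro B hB C hC a b ha hb hab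
    refine ⟨(hB.1.smulR ha).add (hC.1.smulR hb), ?_, ?_⟩
    · refine (matRange_add_le _ _).trans (sup_le ?_ ?_)
      · rw [realSmul_eq]; exact (matRange_smul_le _ _).trans hB.2.1
      · rw [realSmul_eq]; exact (matRange_smul_le _ _).trans hC.2.1
    · rw [ptrans_add, ptrans_smulR, ptrans_smulR]
      refine (matRange_add_le _ _).trans (sup_le ?_ ?_)
      · rw [realSmul_eq]; exact (matRange_smul_le _ _).trans hB.2.2
      · rw [realSmul_eq]; exact (matRange_smul_le _ _).trans hC.2.2
  · -- face property
    intro B hB C hC t ht0 ht1 hD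
    have h1t : (0:ℝ) ≤ 1 - t := by linarith
    have ht : (0:ℝ) ≤ t := le_of_lt ht0
    have h1tc : ((1 - t : ℝ) : ℂ) ≠ 0 := by
      simp only [ne_eq, Complex.ofReal_eq_zero]; linarith
    have htc : ((t : ℝ) : ℂ) ≠ 0 := by
      simp only [ne_eq, Complex.ofReal_eq_zero]; linarith
    have hBp : ((1 - t) • B).PosSemidef := (hB.smulR h1t).posSemidef
    have hCp : (t • C).PosSemidef := (hC.smulR ht).posSemidef
    have hBq : ((1 - t) • ptrans B).PosSemidef := (hB.ptrans.smulR h1t).posSemidef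
    have hCq : (t • ptrans C).PosSemidef := (hC.ptrans.smulR ht).posSemidef
    constructor
    · refine ⟨hB, ?_, ?_⟩
      · have : MatRange B = MatRange ((1 - t) • B) := by
          rw [realSmul_eq, matRange_smul_eq h1tc]
        rw [this]
        exact (matRange_le_add hBp hCp).trans hD.2.1
      · have : MatRange (ptrans B) = MatRange ((1 - t) • ptrans B) := by
          rw [realSmul_eq, matRange_smul_eq h1tc]
        rw [this]
        have h2 : ptrans ((1 - t) • B + t • C) = (1 - t) • ptrans B + t • ptrans C := rfl
        exact (matRange_le_add hBq hCq).trans (h2 ▸ hD.2.2)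
    · refine ⟨hC, ?_, ?_⟩
      · have : MatRange C = MatRange (t • C) := by
          rw [realSmul_eq, matRange_smul_eq htc]
        rw [this]
        have h2 : (1 - t) • B + t • C = t • C + (1 - t) • B := add_comm _ _
        exact (matRange_le_add hCp hBp).trans (h2 ▸ hD.2.1)
      · have : MatRange (ptrans C) = MatRange (t • ptrans C) := by
          rw [realSmul_eq, matRange_smul_eq htc]
        rw [this]
        have h2 : ptrans ((1 - t) • B + t • C) = t • ptrans C + (1 - t) • ptrans B := by
          rw [ptrans_add, ptrans_smulR, ptrans_smulR, add_comm]
        exact (matRange_le_add hCq hBq).trans (h2 ▸ hD.2.2)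

lemma smallestFace_subset_fface {A : M9} (hA : IsSep A) :
    smallestFace V1 A ⊆ Fface A :=
  Set.sInter_subset_of_mem ⟨fface_isFaceOf A, hA, le_rfl, le_rfl⟩

end Aux

/-- For separable `A`, `P[A] ⊆ Q[A]`. -/
theorem stmt0 (A : M9) (hA : IsSep A) : Pvecs A ⊆ Qvecs A := by
  rintro z ⟨⟨x, y, rfl⟩, hz⟩
  have hF : rankOne (prodVec x y) ∈ Fface A := smallestFace_subset_fface hA hz
  refine ⟨x, y, rfl, ?_, ?_⟩
  · exact hF.2.1 (self_mem_matRange_rankOne _)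
  · refine hF.2.2 ?_
    rw [ptrans_rankOne]
    exact self_mem_matRange_rankOne _
end

section
/- For nonzero vectors x, y ∈ ℂ³, the product vector x⊗y lies in the range of A[1,1,1] and its partial conjugate x̄⊗y lies in the range of A[1,1,1]^Γ if and only if y is a nonzero scalar multiple of x̄ and |x₁| = |x₂| = |x₃|. -/
open Matrix BigOperators
open scoped ComplexOrder

lemma mem_range1 (z : V9) : z ∈ MatRange (Amat 1 1 1) ↔
    z (0,0) = z (1,1) ∧ z (1,1) = z (2,2) := by
  constructor
  · rintro ⟨w, rfl⟩
    constructor <;>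
    · simp (config := { decide := true }) only [Matrix.mulVecLin_apply, Matrix.mulVec,
        dotProduct, Fintype.sum_prod_type, Fin.sum_univ_three, Amat, Prod.ext_iff,
        Fin.isValue]
      push_cast
      ring
  · rintro ⟨h1, h2⟩
    refine ⟨fun p => if p.1 = p.2 then z (0,0) / 3 else z p, ?_⟩
    ext ⟨i, k⟩
    fin_cases i <;> fin_cases k <;>
    · simp (config := { decide := true }) only [Matrix.mulVecLin_apply, Matrix.mulVec,
        dotProduct, Fintype.sum_prod_type, Fin.sum_univ_three, Amat, Prod.ext_iff,
        Fin.isValue, Fin.mk_zero, Fin.mk_one, show (⟨2, by omega⟩ : Fin 3) = 2 from rfl]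
      push_cast
      first
      | ring1
      | linear_combination h1
      | linear_combination h1 + h2

lemma mem_range2 (z : V9) : z ∈ MatRange (ptrans (Amat 1 1 1)) ↔
    z (0,1) = z (1,0) ∧ z (0,2) = z (2,0) ∧ z (1,2) = z (2,1) := by
  constructor
  · rintro ⟨w, rfl⟩
    refine ⟨?_, ?_, ?_⟩ <;>
    · simp (config := { decide := true }) only [Matrix.mulVecLin_apply, Matrix.mulVec,
        dotProduct, Fintype.sum_prod_type, Fin.sum_univ_three, Amat, ptrans, Prod.ext_iff,
        Fin.isValue]
      push_cast
      ring
  · rintro ⟨h1, h2, h3⟩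
    refine ⟨fun p => if p.1 = p.2 then z p else z p / 2, ?_⟩
    ext ⟨i, k⟩
    fin_cases i <;> fin_cases k <;>
    · simp (config := { decide := true }) only [Matrix.mulVecLin_apply, Matrix.mulVec,
        dotProduct, Fintype.sum_prod_type, Fin.sum_univ_three, Amat, ptrans, Prod.ext_iff,
        Fin.isValue, Fin.mk_zero, Fin.mk_one, show (⟨2, by omega⟩ : Fin 3) = 2 from rfl]
      push_cast
      first
      | ring1
      | (rw [h1]; ring1)
      | (rw [h2]; ring1)
      | (rw [h3]; ring1)
      | (rw [← h1]; ring1)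
      | (rw [← h2]; ring1)
      | (rw [← h3]; ring1)

/-- characterization of the product vectors `x⊗y` with
`x⊗y ∈ range A[1,1,1]` and `x̄⊗y ∈ range A[1,1,1]^Γ`. -/
theorem stmt10 (x y : Fin 3 → ℂ) (hx : x ≠ 0) (hy : y ≠ 0) :
    (prodVec x y ∈ MatRange (Amat 1 1 1) ∧
        prodVec (conjVec x) y ∈ MatRange (ptrans (Amat 1 1 1))) ↔
      ((∃ c : ℂ, c ≠ 0 ∧ y = c • conjVec x) ∧
        ‖x 0‖ = ‖x 1‖ ∧ ‖x 1‖ = ‖x 2‖) := by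
  rw [mem_range1, mem_range2]
  simp only [prodVec, conjVec]
  constructor
  · rintro ⟨⟨hd1, hd2⟩, hs1, hs2, hs3⟩
    obtain ⟨j, hj⟩ := Function.ne_iff.mp hx
    have hconj : (starRingEnd ℂ) (x j) ≠ 0 := by
      intro h
      apply hj
      have := congrArg (starRingEnd ℂ) h
      simpa using this
    have hsym : ∀ i k : Fin 3, (starRingEnd ℂ) (x i) * y k = (starRingEnd ℂ) (x k) * y i := by
      intro i k
      fin_cases i <;> fin_cases k <;>
        simp only [Fin.mk_zero, Fin.mk_one, show (⟨2, by omega⟩ : Fin 3) = 2 from rfl] <;>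
        first
        | ring1
        | linear_combination hs1
        | linear_combination hs2
        | linear_combination hs3
        | linear_combination -hs1
        | linear_combination -hs2
        | linear_combination -hs3
    set c : ℂ := y j / (starRingEnd ℂ) (x j) with hcdef
    have key : ∀ k, y k = c * (starRingEnd ℂ) (x k) := by
      intro k
      have h := hsym j k
      rw [hcdef]
      field_simp
      first
      | linear_combination h
      | linear_combination -h
      | linear_combination 2 * h
      | linear_combination -2 * h
    have hy' : y = c • conjVec x := by
      funext k
      rw [key k]
      simp [conjVec]
    have hcne : c ≠ 0 := by
      intro h
      apply hy
      rw [hy', h, zero_smul]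
    have k0 := key 0
    have k1 := key 1
    have k2 := key 2
    have e01 : c * ((Complex.normSq (x 0) : ℂ)) = c * ((Complex.normSq (x 1) : ℂ)) := by
      rw [← Complex.mul_conj, ← Complex.mul_conj]
      linear_combination hd1 - x 0 * k0 + x 1 * k1
    have e12 : c * ((Complex.normSq (x 1) : ℂ)) = c * ((Complex.normSq (x 2) : ℂ)) := by
      rw [← Complex.mul_conj, ← Complex.mul_conj]
      linear_combination hd2 - x 1 * k1 + x 2 * k2
    have n01 : Complex.normSq (x 0) = Complex.normSq (x 1) := by
      exact_mod_cast mul_left_cancel₀ hcne e01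
    have n12 : Complex.normSq (x 1) = Complex.normSq (x 2) := by
      exact_mod_cast mul_left_cancel₀ hcne e12
    exact ⟨⟨c, hcne, hy'⟩, by rw [Complex.norm_def, Complex.norm_def, n01],
      by rw [Complex.norm_def, Complex.norm_def, n12]⟩
  · rintro ⟨⟨c, hc, rfl⟩, hab1, hab2⟩
    have n01 : Complex.normSq (x 0) = Complex.normSq (x 1) := by
      rw [Complex.normSq_eq_norm_sq, Complex.normSq_eq_norm_sq, hab1]
    have n12 : Complex.normSq (x 1) = Complex.normSq (x 2) := by
      rw [Complex.normSq_eq_norm_sq, Complex.normSq_eq_norm_sq, hab2]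
    have e0 := Complex.mul_conj (x 0)
    have e1 := Complex.mul_conj (x 1)
    have e2 := Complex.mul_conj (x 2)
    have c01 : ((Complex.normSq (x 0) : ℂ)) = ((Complex.normSq (x 1) : ℂ)) :=
      Complex.ofReal_inj.mpr n01
    have c12 : ((Complex.normSq (x 1) : ℂ)) = ((Complex.normSq (x 2) : ℂ)) :=
      Complex.ofReal_inj.mpr n12
    simp only [Pi.smul_apply, conjVec, smul_eq_mul]
    refine ⟨⟨?_, ?_⟩, ?_, ?_, ?_⟩
    · linear_combination c * e0 - c * e1 + c * c01
    · linear_combination c * e1 - c * e2 + c * c12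
    · ring
    · ring
    · ring
end

section
/- Let b > 0 with b ≠ 1. For nonzero vectors x, y ∈ ℂ³, the product vector x⊗y lies in the range of A[2, b, 1/b] and its partial conjugate x̄⊗y lies in the range of A[2, b, 1/b]^Γ if and only if x⊗y is a nonzero scalar multiple of a product vector of one of the three forms (0, w̄₂, b w̄₃)ᵗ ⊗ (0, w₂, w₃)ᵗ, (b w̄₁, 0, w̄₃)ᵗ ⊗ (w₁, 0, w₃)ᵗ, or (w̄₁, b w̄₂, 0)ᵗ ⊗ (w₁, w₂, 0)ᵗ for some complex numbers w₁, w₂, w₃. -/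
open Matrix BigOperators
open scoped ComplexOrder

lemma memRangeA (b : ℝ) (hb : 0 < b) (v : V9) : v ∈ MatRange (Amat 2 b (1 / b)) := by
  have hb' : (b : ℂ) ≠ 0 := by exact_mod_cast hb.ne'
  refine ⟨(fun p => if p.1 = p.2 then v p - (v (0,0) + v (1,1) + v (2,2))/4
    else if p.2 = p.1 + 1 then (b : ℂ) * v p else v p / (b:ℂ)), ?_⟩
  funext p
  simp only [Matrix.mulVecLin_apply, Matrix.mulVec, dotProduct, Fintype.sum_prod_type,
    Fin.sum_univ_three, Amat]
  fin_cases p <;> simp (config := { decide := true }) [Prod.ext_iff] <;> field_simp <;> ring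

lemma memRangeGamma (b : ℝ) (hb : 0 < b) (v : V9) :
    v ∈ MatRange (ptrans (Amat 2 b (1 / b))) ↔
      (v (1,0) = b * v (0,1) ∧ v (2,1) = b * v (1,2) ∧ v (0,2) = b * v (2,0)) := by
  have hb' : (b : ℂ) ≠ 0 := by exact_mod_cast hb.ne'
  constructor
  · rintro ⟨w, rfl⟩
    refine ⟨?_, ?_, ?_⟩ <;>
    · simp only [Matrix.mulVecLin_apply, Matrix.mulVec, dotProduct, Fintype.sum_prod_type,
        Fin.sum_univ_three, ptrans, Amat]
      simp (config := { decide := true }) [Prod.ext_iff]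
      field_simp
  · rintro ⟨h1, h2, h3⟩
    refine ⟨(fun p => if p = (0,0) ∨ p = (1,1) ∨ p = (2,2) then v p / 2
      else if p = (1,0) then v (0,1) else if p = (2,1) then v (1,2)
      else if p = (2,0) then v (0,2) else 0), ?_⟩
    funext p
    simp only [Matrix.mulVecLin_apply, Matrix.mulVec, dotProduct, Fintype.sum_prod_type,
      Fin.sum_univ_three, ptrans, Amat]
    fin_cases p <;>
      simp (config := { decide := true }) [Prod.ext_iff, h1, h2, h3] <;>
      (try field_simp) <;> (try ring)

lemma split3 (x y X Y : Fin 3 → ℂ) (hx : x ≠ 0) (hy : y ≠ 0) (c : ℂ)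
    (h : prodVec x y = c • prodVec X Y) : ∃ α β : ℂ, x = α • X ∧ y = β • Y := by
  obtain ⟨i0, hi0⟩ : ∃ i, x i ≠ 0 := by
    by_contra hcon; push_neg at hcon; exact hx (funext hcon)
  obtain ⟨k0, hk0⟩ : ∃ k, y k ≠ 0 := by
    by_contra hcon; push_neg at hcon; exact hy (funext hcon)
  have he : ∀ i k, x i * y k = c * (X i * Y k) := by
    intro i k
    simpa [prodVec] using congrFun h (i, k)
  refine ⟨c * Y k0 / y k0, c * X i0 / x i0, funext fun i => ?_, funext fun k => ?_⟩
  · have h1 := he i k0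
    simp only [Pi.smul_apply, smul_eq_mul]
    field_simp
    linear_combination h1
  · have h1 := he i0 k
    simp only [Pi.smul_apply, smul_eq_mul]
    field_simp
    linear_combination h1

set_option maxHeartbeats 1600000 in
/-- characterization of the product vectors `x⊗y` with
`x⊗y ∈ range A[2,b,1/b]` and `x̄⊗y ∈ range A[2,b,1/b]^Γ`, for `b > 0`, `b ≠ 1`. -/
theorem stmt11 (b : ℝ) (hb : 0 < b) (hb1 : b ≠ 1) (x y : Fin 3 → ℂ)
    (hx : x ≠ 0) (hy : y ≠ 0) :
    (prodVec x y ∈ MatRange (Amat 2 b (1 / b)) ∧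
        prodVec (conjVec x) y ∈ MatRange (ptrans (Amat 2 b (1 / b)))) ↔
      ∃ c : ℂ, c ≠ 0 ∧
        ((∃ w2 w3 : ℂ,
            prodVec x y = c • prodVec ![0, star w2, (b : ℂ) * star w3] ![0, w2, w3]) ∨
         (∃ w1 w3 : ℂ,
            prodVec x y = c • prodVec ![(b : ℂ) * star w1, 0, star w3] ![w1, 0, w3]) ∨
         (∃ w1 w2 : ℂ,
            prodVec x y = c • prodVec ![star w1, (b : ℂ) * star w2, 0] ![w1, w2, 0])) := by
  have hb' : (b : ℂ) ≠ 0 := by exact_mod_cast hb.ne'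
  obtain ⟨x0, x1, x2, rfl⟩ : ∃ a0 a1 a2 : ℂ, x = ![a0, a1, a2] :=
    ⟨x 0, x 1, x 2, by funext i; fin_cases i <;> rfl⟩
  obtain ⟨y0, y1, y2, rfl⟩ : ∃ a0 a1 a2 : ℂ, y = ![a0, a1, a2] :=
    ⟨y 0, y 1, y 2, by funext i; fin_cases i <;> rfl⟩
  have hxne : ¬(x0 = 0 ∧ x1 = 0 ∧ x2 = 0) := by
    rintro ⟨rfl, rfl, rfl⟩
    exact hx (by funext i; fin_cases i <;> rfl)
  have hyne : ¬(y0 = 0 ∧ y1 = 0 ∧ y2 = 0) := by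
    rintro ⟨rfl, rfl, rfl⟩
    exact hy (by funext i; fin_cases i <;> rfl)
  constructor
  · rintro ⟨-, hΓ⟩
    rw [memRangeGamma b hb] at hΓ
    obtain ⟨h1, h2, h3⟩ := hΓ
    simp only [prodVec, conjVec] at h1 h2 h3
    norm_num at h1 h2 h3
    have g1 : x1 * (starRingEnd ℂ) y0 = (b:ℂ) * (x0 * (starRingEnd ℂ) y1) := by
      have := congrArg (starRingEnd ℂ) h1
      simpa [_root_.map_mul, Complex.conj_ofReal] using this
    have g2 : x2 * (starRingEnd ℂ) y1 = (b:ℂ) * (x1 * (starRingEnd ℂ) y2) := by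
      have := congrArg (starRingEnd ℂ) h2
      simpa [_root_.map_mul, Complex.conj_ofReal] using this
    have g3 : x0 * (starRingEnd ℂ) y2 = (b:ℂ) * (x2 * (starRingEnd ℂ) y0) := by
      have := congrArg (starRingEnd ℂ) h3
      simpa [_root_.map_mul, Complex.conj_ofReal] using this
    have hb3 : (1 : ℂ) - (b:ℂ)^3 ≠ 0 := by
      rw [sub_ne_zero]
      intro hcon
      have hr : (1:ℝ) = b^3 := by exact_mod_cast hcon
      exact hb1 (by nlinarith [sq_nonneg (b-1), sq_nonneg (b+1), sq_nonneg b])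
    have key : ((1 : ℂ) - (b:ℂ)^3) *
        (x0 * x1 * x2 * ((starRingEnd ℂ) y0 * (starRingEnd ℂ) y1 * (starRingEnd ℂ) y2)) = 0 := by
      linear_combination (x2 * (starRingEnd ℂ) y1 * (x0 * (starRingEnd ℂ) y2)) * g1
        + ((b:ℂ) * (x0 * (starRingEnd ℂ) y1) * (x0 * (starRingEnd ℂ) y2)) * g2
        + ((b:ℂ) * (x0 * (starRingEnd ℂ) y1) * (b:ℂ) * (x1 * (starRingEnd ℂ) y2)) * g3
    have P0 : x0 * x1 * x2 * ((starRingEnd ℂ) y0 * (starRingEnd ℂ) y1 *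
        (starRingEnd ℂ) y2) = 0 := by
      rcases mul_eq_zero.mp key with h | h
      · exact absurd h hb3
      · exact h
    have q0x : x0 = 0 → y0 = 0 := by
      intro h0
      by_contra hy0
      have hs0 : (starRingEnd ℂ) y0 ≠ 0 := by simpa using hy0
      refine hxne ⟨h0, ?_, ?_⟩
      · have h' : x1 * (starRingEnd ℂ) y0 = 0 := by rw [h0] at g1; simpa using g1
        exact (mul_eq_zero.mp h').resolve_right hs0
      · have h' : (b:ℂ) * (x2 * (starRingEnd ℂ) y0) = 0 := by rw [h0] at g3; simpa using g3.symm
        have h'' := (mul_eq_zero.mp h').resolve_left hb'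
        exact (mul_eq_zero.mp h'').resolve_right hs0
    have q0y : y0 = 0 → x0 = 0 := by
      intro h0
      by_contra hx0
      have hs0 : (starRingEnd ℂ) y0 = 0 := by simp [h0]
      refine hyne ⟨h0, ?_, ?_⟩
      · have h' : (b:ℂ) * (x0 * (starRingEnd ℂ) y1) = 0 := by rw [hs0] at g1; simpa using g1.symm
        have h'' := (mul_eq_zero.mp h').resolve_left hb'
        simpa using (mul_eq_zero.mp h'').resolve_left hx0
      · have h' : x0 * (starRingEnd ℂ) y2 = 0 := by rw [hs0] at g3; simpa using g3
        simpa using (mul_eq_zero.mp h').resolve_left hx0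
    have q1x : x1 = 0 → y1 = 0 := by
      intro h0
      by_contra hy1
      have hs1 : (starRingEnd ℂ) y1 ≠ 0 := by simpa using hy1
      refine hxne ⟨?_, h0, ?_⟩
      · have h' : (b:ℂ) * (x0 * (starRingEnd ℂ) y1) = 0 := by rw [h0] at g1; simpa using g1.symm
        have h'' := (mul_eq_zero.mp h').resolve_left hb'
        exact (mul_eq_zero.mp h'').resolve_right hs1
      · have h' : x2 * (starRingEnd ℂ) y1 = 0 := by rw [h0] at g2; simpa using g2
        exact (mul_eq_zero.mp h').resolve_right hs1
    have q1y : y1 = 0 → x1 = 0 := by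
      intro h0
      by_contra hx1
      have hs1 : (starRingEnd ℂ) y1 = 0 := by simp [h0]
      refine hyne ⟨?_, h0, ?_⟩
      · have h' : x1 * (starRingEnd ℂ) y0 = 0 := by rw [hs1] at g1; simpa using g1
        simpa using (mul_eq_zero.mp h').resolve_left hx1
      · have h' : (b:ℂ) * (x1 * (starRingEnd ℂ) y2) = 0 := by rw [hs1] at g2; simpa using g2.symm
        have h'' := (mul_eq_zero.mp h').resolve_left hb'
        simpa using (mul_eq_zero.mp h'').resolve_left hx1
    have q2x : x2 = 0 → y2 = 0 := by
      intro h0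
      by_contra hy2
      have hs2 : (starRingEnd ℂ) y2 ≠ 0 := by simpa using hy2
      refine hxne ⟨?_, ?_, h0⟩
      · have h' : x0 * (starRingEnd ℂ) y2 = 0 := by rw [h0] at g3; simpa using g3
        exact (mul_eq_zero.mp h').resolve_right hs2
      · have h' : (b:ℂ) * (x1 * (starRingEnd ℂ) y2) = 0 := by rw [h0] at g2; simpa using g2.symm
        have h'' := (mul_eq_zero.mp h').resolve_left hb'
        exact (mul_eq_zero.mp h'').resolve_right hs2
    have q2y : y2 = 0 → x2 = 0 := by
      intro h0
      by_contra hx2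
      have hs2 : (starRingEnd ℂ) y2 = 0 := by simp [h0]
      refine hyne ⟨?_, ?_, h0⟩
      · have h' : (b:ℂ) * (x2 * (starRingEnd ℂ) y0) = 0 := by rw [hs2] at g3; simpa using g3.symm
        have h'' := (mul_eq_zero.mp h').resolve_left hb'
        simpa using (mul_eq_zero.mp h'').resolve_left hx2
      · have h' : x2 * (starRingEnd ℂ) y1 = 0 := by rw [hs2] at g2; simpa using g2
        simpa using (mul_eq_zero.mp h').resolve_left hx2
    have main : (x0 = 0 ∧ y0 = 0) ∨ (x1 = 0 ∧ y1 = 0) ∨ (x2 = 0 ∧ y2 = 0) := by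
      rcases mul_eq_zero.mp P0 with h | h
      · rcases mul_eq_zero.mp h with h | h
        · rcases mul_eq_zero.mp h with h | h
          · exact Or.inl ⟨h, q0x h⟩
          · exact Or.inr (Or.inl ⟨h, q1x h⟩)
        · exact Or.inr (Or.inr ⟨h, q2x h⟩)
      · rcases mul_eq_zero.mp h with h | h
        · rcases mul_eq_zero.mp h with h | h
          · have h0 : y0 = 0 := by simpa using h
            exact Or.inl ⟨q0y h0, h0⟩
          · have h0 : y1 = 0 := by simpa using h
            exact Or.inr (Or.inl ⟨q1y h0, h0⟩)
        · have h0 : y2 = 0 := by simpa using h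
          exact Or.inr (Or.inr ⟨q2y h0, h0⟩)
    rcases main with ⟨hx0, hy0⟩ | ⟨hx1, hy1⟩ | ⟨hx2, hy2⟩
    · subst hx0 hy0
      by_cases hx1 : x1 = 0
      · subst hx1
        have hx2 : x2 ≠ 0 := fun h => hxne ⟨rfl, rfl, h⟩
        have hy1 : y1 = 0 := by
          have h' : x2 * (starRingEnd ℂ) y1 = 0 := by simpa using g2
          simpa using (mul_eq_zero.mp h').resolve_left hx2
        subst hy1
        have hy2 : y2 ≠ 0 := fun h => hyne ⟨rfl, rfl, h⟩
        have hs2 : (starRingEnd ℂ) y2 ≠ 0 := by simpa using hy2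
        refine ⟨x2 / ((b:ℂ) * (starRingEnd ℂ) y2),
          div_ne_zero hx2 (mul_ne_zero hb' hs2), Or.inl ⟨0, y2, ?_⟩⟩
        funext p
        fin_cases p
        case _ => simp [prodVec]
        case _ => simp [prodVec]
        case _ => simp [prodVec]
        case _ => simp [prodVec]
        case _ => simp [prodVec]
        case _ => simp [prodVec]
        case _ => simp [prodVec]
        case _ => simp [prodVec]
        case _ => simp [prodVec, Complex.star_def]; field_simp
      · have hy1 : y1 ≠ 0 := fun h => hx1 (q1y h)
        have hs1 : (starRingEnd ℂ) y1 ≠ 0 := by simpa using hy1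
        refine ⟨x1 / (starRingEnd ℂ) y1, div_ne_zero hx1 hs1, Or.inl ⟨y1, y2, ?_⟩⟩
        funext p
        fin_cases p
        case _ => simp [prodVec]
        case _ => simp [prodVec]
        case _ => simp [prodVec]
        case _ => simp [prodVec]
        case _ => simp [prodVec, Complex.star_def]; field_simp
        case _ => simp [prodVec, Complex.star_def]; field_simp
        case _ => simp [prodVec]
        case _ => simp [prodVec, Complex.star_def]; field_simp; linear_combination g2
        case _ => simp [prodVec, Complex.star_def]; field_simp; linear_combination y2 * g2
    · subst hx1 hy1
      by_cases hx2 : x2 = 0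
      · subst hx2
        have hx0 : x0 ≠ 0 := fun h => hxne ⟨h, rfl, rfl⟩
        have hy2 : y2 = 0 := by
          have h' : x0 * (starRingEnd ℂ) y2 = 0 := by simpa using g3
          simpa using (mul_eq_zero.mp h').resolve_left hx0
        subst hy2
        have hy0 : y0 ≠ 0 := fun h => hyne ⟨h, rfl, rfl⟩
        have hs0 : (starRingEnd ℂ) y0 ≠ 0 := by simpa using hy0
        refine ⟨x0 / ((b:ℂ) * (starRingEnd ℂ) y0),
          div_ne_zero hx0 (mul_ne_zero hb' hs0), Or.inr (Or.inl ⟨y0, 0, ?_⟩)⟩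
        funext p
        fin_cases p
        case _ => simp [prodVec, Complex.star_def]; field_simp
        case _ => simp [prodVec]
        case _ => simp [prodVec]
        case _ => simp [prodVec]
        case _ => simp [prodVec]
        case _ => simp [prodVec]
        case _ => simp [prodVec]
        case _ => simp [prodVec]
        case _ => simp [prodVec]
      · have hy2 : y2 ≠ 0 := fun h => hx2 (q2y h)
        have hs2 : (starRingEnd ℂ) y2 ≠ 0 := by simpa using hy2
        refine ⟨x2 / (starRingEnd ℂ) y2, div_ne_zero hx2 hs2, Or.inr (Or.inl ⟨y0, y2, ?_⟩)⟩
        funext p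
        fin_cases p
        case _ => simp [prodVec, Complex.star_def]; field_simp; linear_combination y0 * g3
        case _ => simp [prodVec]
        case _ => simp [prodVec, Complex.star_def]; field_simp; linear_combination g3
        case _ => simp [prodVec]
        case _ => simp [prodVec]
        case _ => simp [prodVec]
        case _ => simp [prodVec, Complex.star_def]; field_simp
        case _ => simp [prodVec]
        case _ => simp [prodVec, Complex.star_def]; field_simp
    · subst hx2 hy2
      by_cases hx0 : x0 = 0
      · subst hx0
        have hx1 : x1 ≠ 0 := fun h => hxne ⟨rfl, h, rfl⟩
        have hy0 : y0 = 0 := by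
          have h' : x1 * (starRingEnd ℂ) y0 = 0 := by simpa using g1
          simpa using (mul_eq_zero.mp h').resolve_left hx1
        subst hy0
        have hy1 : y1 ≠ 0 := fun h => hyne ⟨rfl, h, rfl⟩
        have hs1 : (starRingEnd ℂ) y1 ≠ 0 := by simpa using hy1
        refine ⟨x1 / ((b:ℂ) * (starRingEnd ℂ) y1),
          div_ne_zero hx1 (mul_ne_zero hb' hs1), Or.inr (Or.inr ⟨0, y1, ?_⟩)⟩
        funext p
        fin_cases p
        case _ => simp [prodVec]
        case _ => simp [prodVec]
        case _ => simp [prodVec]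
        case _ => simp [prodVec]
        case _ => simp [prodVec, Complex.star_def]; field_simp
        case _ => simp [prodVec]
        case _ => simp [prodVec]
        case _ => simp [prodVec]
        case _ => simp [prodVec]
      · have hy0 : y0 ≠ 0 := fun h => hx0 (q0y h)
        have hs0 : (starRingEnd ℂ) y0 ≠ 0 := by simpa using hy0
        refine ⟨x0 / (starRingEnd ℂ) y0, div_ne_zero hx0 hs0, Or.inr (Or.inr ⟨y0, y1, ?_⟩)⟩
        funext p
        fin_cases p
        case _ => simp [prodVec, Complex.star_def]; field_simp
        case _ => simp [prodVec, Complex.star_def]; field_simp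
        case _ => simp [prodVec]
        case _ => simp [prodVec, Complex.star_def]; field_simp; linear_combination g1
        case _ => simp [prodVec, Complex.star_def]; field_simp; linear_combination y1 * g1
        case _ => simp [prodVec]
        case _ => simp [prodVec]
        case _ => simp [prodVec]
        case _ => simp [prodVec]
  · rintro ⟨c, -, H⟩
    refine ⟨memRangeA b hb _, ?_⟩
    rw [memRangeGamma b hb]
    rcases H with ⟨w2, w3, h⟩ | ⟨w1, w3, h⟩ | ⟨w1, w2, h⟩ <;>
      obtain ⟨α, β, hxa, hyb⟩ := split3 _ _ _ _ hx hy c h <;>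
      rw [hxa, hyb] <;>
      refine ⟨?_, ?_, ?_⟩ <;>
      · simp [prodVec, conjVec, Pi.smul_apply, smul_eq_mul, _root_.map_mul,
          Complex.conj_ofReal, Complex.star_def]
        try ring_nf
end

section
/- Let b > 0 with b ≠ 1, and let z = x⊗y be a nonzero product vector with x⊗y ∈ range A[2, b, 1/b] and x̄⊗y ∈ range A[2, b, 1/b]^Γ. Then ⟨zz*, Φ(1/b)⟩ = 0 if and only if z is a nonzero scalar multiple of a product vector of one of the three forms (0, w̄₂, b w̄₃)ᵗ ⊗ (0, w₂, w₃)ᵗ with |w₂|² = b|w₃|², (b w̄₁, 0, w̄₃)ᵗ ⊗ (w₁, 0, w₃)ᵗ with |w₃|² = b|w₁|², or (w̄₁, b w̄₂, 0)ᵗ ⊗ (w₁, w₂, 0)ᵗ with |w₁|² = b|w₂|². -/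
open Matrix BigOperators
open scoped ComplexOrder

/-- 3×3 complex matrices. -/
abbrev M3 : Type := Matrix (Fin 3) (Fin 3) ℂ

/-- The generalized Choi map `Φ[α,β,γ]`. -/
noncomputable def PhiMap (α β γ : ℝ) (X : M3) : M3 := fun i j =>
  if i = j then (α : ℂ) * X i i + (β : ℂ) * X (i + 1) (i + 1) + (γ : ℂ) * X (i + 2) (i + 2)
  else - X i j

/-- The Choi matrix `C_φ = ∑ e_{ij} ⊗ φ(e_{ij})`. -/
noncomputable def ChoiMat (φ : M3 → M3) : M9 :=
  fun p q => φ (Matrix.single p.1 q.1 1) p.2 q.2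

/-- The pairing `⟨A,φ⟩ = Tr(C_φ Aᵗ)`. -/
noncomputable def pairing (A : M9) (φ : M3 → M3) : ℂ := Matrix.trace (ChoiMat φ * Aᵀ)

/-- The one-parameter family `Φ(t)`. -/
noncomputable def PhiT (t : ℝ) : M3 → M3 :=
  PhiMap ((1 - t) ^ 2 / (1 - t + t ^ 2)) (t ^ 2 / (1 - t + t ^ 2)) (1 / (1 - t + t ^ 2))

/-- The dual face `φ′ = {A ∈ V₁ : ⟨A,φ⟩ = 0}`. -/
def dualFace (φ : M3 → M3) : Set M9 := {A | A ∈ V1 ∧ pairing A φ = 0}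

local notation "cj" => (starRingEnd ℂ)

private lemma conj_ne_zero' {z : ℂ} (h : z ≠ 0) : cj z ≠ 0 := by
  intro h0; exact h (by simpa using congrArg cj h0)

private lemma pairing_formula (t : ℝ) (x y : Fin 3 → ℂ) :
    pairing (rankOne (prodVec x y)) (PhiT t) =
      ((1 - (t:ℂ))^2 / (1 - t + t^2)) *
        ((x 0 * y 0) * cj (x 0 * y 0) + (x 1 * y 1) * cj (x 1 * y 1) + (x 2 * y 2) * cj (x 2 * y 2))
    + ((t:ℂ)^2 / (1 - t + t^2)) *
        ((x 1 * y 0) * cj (x 1 * y 0) + (x 2 * y 1) * cj (x 2 * y 1) + (x 0 * y 2) * cj (x 0 * y 2))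
    + (1 / (1 - (t:ℂ) + t^2)) *
        ((x 2 * y 0) * cj (x 2 * y 0) + (x 0 * y 1) * cj (x 0 * y 1) + (x 1 * y 2) * cj (x 1 * y 2))
    - ((x 0 * y 0) * cj (x 1 * y 1) + (x 0 * y 0) * cj (x 2 * y 2)
     + (x 1 * y 1) * cj (x 0 * y 0) + (x 1 * y 1) * cj (x 2 * y 2)
     + (x 2 * y 2) * cj (x 0 * y 0) + (x 2 * y 2) * cj (x 1 * y 1)) := by
  simp only [pairing, Matrix.trace, Matrix.diag, Matrix.mul_apply]
  unfold ChoiMat PhiT PhiMap rankOne prodVec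
  simp [Matrix.trace, Matrix.mul_apply, Matrix.vecMulVec, Fintype.sum_prod_type,
    Fin.sum_univ_three, Matrix.single, Matrix.diag]
  ring

private lemma pairing_formula' (b : ℝ) (hb : 0 < b) (x y : Fin 3 → ℂ) :
    ((b:ℂ)^2 - b + 1) * pairing (rankOne (prodVec x y)) (PhiT (1/b)) =
      ((b:ℂ) - 1)^2 *
        ((x 0 * y 0) * cj (x 0 * y 0) + (x 1 * y 1) * cj (x 1 * y 1) + (x 2 * y 2) * cj (x 2 * y 2))
    + ((x 1 * y 0) * cj (x 1 * y 0) + (x 2 * y 1) * cj (x 2 * y 1) + (x 0 * y 2) * cj (x 0 * y 2))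
    + (b:ℂ)^2 *
        ((x 2 * y 0) * cj (x 2 * y 0) + (x 0 * y 1) * cj (x 0 * y 1) + (x 1 * y 2) * cj (x 1 * y 2))
    - ((b:ℂ)^2 - b + 1) *
      ((x 0 * y 0) * cj (x 1 * y 1) + (x 0 * y 0) * cj (x 2 * y 2)
     + (x 1 * y 1) * cj (x 0 * y 0) + (x 1 * y 1) * cj (x 2 * y 2)
     + (x 2 * y 2) * cj (x 0 * y 0) + (x 2 * y 2) * cj (x 1 * y 1)) := by
  have hb0 : (b : ℂ) ≠ 0 := by exact_mod_cast hb.ne'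
  have hD : (0:ℝ) < b^2 - b + 1 := by nlinarith
  have hD0 : ((b:ℂ)^2 - (b:ℂ) + 1) ≠ 0 := by
    intro h
    have : ((b^2 - b + 1 : ℝ) : ℂ) = 0 := by push_cast; linear_combination h
    exact absurd (Complex.ofReal_eq_zero.mp this) hD.ne'
  rw [pairing_formula]
  rw [show ((1/b:ℝ):ℂ) = 1/(b:ℂ) by push_cast; ring]
  have key : ((1:ℂ) - 1/(b:ℂ) + (1/(b:ℂ))^2) = ((b:ℂ)^2 - b + 1)/((b:ℂ)^2) := by
    field_simp
  rw [key]
  have hD1 : (b:ℂ) * ((b:ℂ) - 1) + 1 ≠ 0 := by intro h; apply hD0; linear_combination h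
  field_simp

private lemma smul_prodVec (c : ℂ) (X Y : Fin 3 → ℂ) :
    c • prodVec X Y = prodVec (fun i => c * X i) Y := by
  funext p; simp [prodVec]; ring
/-- for `b > 0`, `b ≠ 1` and a nonzero product vector `z = x⊗y` with
`x⊗y ∈ range A[2,b,1/b]` and `x̄⊗y ∈ range A[2,b,1/b]^Γ`, we have `⟨zz*, Φ(1/b)⟩ = 0`
iff `z` is a nonzero scalar multiple of one of the three displayed forms. -/
theorem stmt12 (b : ℝ) (hb : 0 < b) (hb1 : b ≠ 1) (x y : Fin 3 → ℂ)
    (hz : prodVec x y ≠ 0)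
    (h1 : prodVec x y ∈ MatRange (Amat 2 b (1 / b)))
    (h2 : prodVec (conjVec x) y ∈ MatRange (ptrans (Amat 2 b (1 / b)))) :
    pairing (rankOne (prodVec x y)) (PhiT (1 / b)) = 0 ↔
      ∃ c : ℂ, c ≠ 0 ∧
        ((∃ w2 w3 : ℂ,
            prodVec x y = c • prodVec ![0, star w2, (b : ℂ) * star w3] ![0, w2, w3] ∧
            ‖w2‖ ^ 2 = b * ‖w3‖ ^ 2) ∨
         (∃ w1 w3 : ℂ,
            prodVec x y = c • prodVec ![(b : ℂ) * star w1, 0, star w3] ![w1, 0, w3] ∧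
            ‖w3‖ ^ 2 = b * ‖w1‖ ^ 2) ∨
         (∃ w1 w2 : ℂ,
            prodVec x y = c • prodVec ![star w1, (b : ℂ) * star w2, 0] ![w1, w2, 0] ∧
            ‖w1‖ ^ 2 = b * ‖w2‖ ^ 2)) := by
  have hb0 : (b : ℂ) ≠ 0 := by exact_mod_cast hb.ne'
  have hb1c : ((b:ℂ) - 1) ≠ 0 := sub_ne_zero.mpr (by exact_mod_cast hb1)
  have hD : (0:ℝ) < b^2 - b + 1 := by nlinarith
  have hD0 : ((b:ℂ)^2 - (b:ℂ) + 1) ≠ 0 := by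
    intro h
    have : ((b^2 - b + 1 : ℝ) : ℂ) = 0 := by push_cast; linear_combination h
    exact absurd (Complex.ofReal_eq_zero.mp this) hD.ne'
  -- extract the three range constraints
  obtain ⟨w, hw⟩ := h2
  have eq1 : cj (x 1) * y 0 = (b:ℂ) * (cj (x 0) * y 1) := by
    have e10 := congrFun hw ((1 : Fin 3), (0 : Fin 3))
    have e01 := congrFun hw ((0 : Fin 3), (1 : Fin 3))
    simp [Matrix.mulVecLin_apply, Matrix.mulVec, dotProduct, ptrans, Amat,
      Fintype.sum_prod_type, Fin.sum_univ_three, prodVec, conjVec] at e10 e01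
    field_simp at e01
    linear_combination e01 - e10
  have eq2 : cj (x 2) * y 1 = (b:ℂ) * (cj (x 1) * y 2) := by
    have e10 := congrFun hw ((2 : Fin 3), (1 : Fin 3))
    have e01 := congrFun hw ((1 : Fin 3), (2 : Fin 3))
    simp [Matrix.mulVecLin_apply, Matrix.mulVec, dotProduct, ptrans, Amat,
      Fintype.sum_prod_type, Fin.sum_univ_three, prodVec, conjVec] at e10 e01
    field_simp at e01
    linear_combination e01 - e10
  have eq3 : cj (x 0) * y 2 = (b:ℂ) * (cj (x 2) * y 0) := by
    have e10 := congrFun hw ((0 : Fin 3), (2 : Fin 3))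
    have e01 := congrFun hw ((2 : Fin 3), (0 : Fin 3))
    simp [Matrix.mulVecLin_apply, Matrix.mulVec, dotProduct, ptrans, Amat,
      Fintype.sum_prod_type, Fin.sum_univ_three, prodVec, conjVec] at e10 e01
    field_simp at e01
    linear_combination e01 - e10
  have ceq1 : x 1 * cj (y 0) = (b:ℂ) * (x 0 * cj (y 1)) := by
    have := congrArg cj eq1
    simpa [_root_.map_mul, Complex.conj_ofReal] using this
  have ceq2 : x 2 * cj (y 1) = (b:ℂ) * (x 1 * cj (y 2)) := by
    have := congrArg cj eq2
    simpa [_root_.map_mul, Complex.conj_ofReal] using this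
  have ceq3 : x 0 * cj (y 2) = (b:ℂ) * (x 2 * cj (y 0)) := by
    have := congrArg cj eq3
    simpa [_root_.map_mul, Complex.conj_ofReal] using this
  -- zero-pattern equivalences
  have hiff0 : x 0 = 0 ↔ y 0 = 0 := by
    constructor
    · intro h
      by_contra hy
      have h1' : x 1 = 0 := by
        have e := eq1; rw [h] at e; simp only [map_zero, zero_mul, mul_zero] at e
        have := (mul_eq_zero.mp e).resolve_right hy
        simpa using this
      have h2' : x 2 = 0 := by
        have e := eq3; rw [h] at e; simp only [map_zero, zero_mul, mul_zero] at e
        have : cj (x 2) * y 0 = 0 := by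
          rcases mul_eq_zero.mp e.symm with h' | h'
          · exact absurd h' hb0
          · exact h'
        have := (mul_eq_zero.mp this).resolve_right hy
        simpa using this
      exact hz (by funext p; fin_cases p <;> simp [prodVec, h, h1', h2'])
    · intro h
      by_contra hx
      have h1' : y 1 = 0 := by
        have e := eq1; rw [h] at e; simp only [mul_zero, zero_mul] at e
        rcases mul_eq_zero.mp e.symm with h' | h'
        · exact absurd h' hb0
        · rcases mul_eq_zero.mp h' with h'' | h''
          · exact absurd (by simpa using h'') hx
          · exact h''
      have h2' : y 2 = 0 := by
        have e := eq3; rw [h] at e; simp only [mul_zero, zero_mul] at e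
        rcases mul_eq_zero.mp e with h' | h'
        · exact absurd (by simpa using h') hx
        · exact h'
      exact hz (by funext p; fin_cases p <;> simp [prodVec, h, h1', h2'])
  have hiff1 : x 1 = 0 ↔ y 1 = 0 := by
    constructor
    · intro h
      by_contra hy
      have h1' : x 2 = 0 := by
        have e := eq2; rw [h] at e; simp only [map_zero, zero_mul, mul_zero] at e
        have := (mul_eq_zero.mp e).resolve_right hy
        simpa using this
      have h2' : x 0 = 0 := by
        have e := eq1; rw [h] at e; simp only [map_zero, zero_mul, mul_zero] at e
        have : cj (x 0) * y 1 = 0 := by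
          rcases mul_eq_zero.mp e.symm with h' | h'
          · exact absurd h' hb0
          · exact h'
        have := (mul_eq_zero.mp this).resolve_right hy
        simpa using this
      exact hz (by funext p; fin_cases p <;> simp [prodVec, h, h1', h2'])
    · intro h
      by_contra hx
      have h1' : y 2 = 0 := by
        have e := eq2; rw [h] at e; simp only [mul_zero, zero_mul] at e
        rcases mul_eq_zero.mp e.symm with h' | h'
        · exact absurd h' hb0
        · rcases mul_eq_zero.mp h' with h'' | h''
          · exact absurd (by simpa using h'') hx
          · exact h''
      have h2' : y 0 = 0 := by
        have e := eq1; rw [h] at e; simp only [mul_zero, zero_mul] at e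
        rcases mul_eq_zero.mp e with h' | h'
        · exact absurd (by simpa using h') hx
        · exact h'
      exact hz (by funext p; fin_cases p <;> simp [prodVec, h, h1', h2'])
  have hiff2 : x 2 = 0 ↔ y 2 = 0 := by
    constructor
    · intro h
      by_contra hy
      have h1' : x 0 = 0 := by
        have e := eq3; rw [h] at e; simp only [map_zero, zero_mul, mul_zero] at e
        have := (mul_eq_zero.mp e).resolve_right hy
        simpa using this
      have h2' : x 1 = 0 := by
        have e := eq2; rw [h] at e; simp only [map_zero, zero_mul, mul_zero] at e
        have : cj (x 1) * y 2 = 0 := by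
          rcases mul_eq_zero.mp e.symm with h' | h'
          · exact absurd h' hb0
          · exact h'
        have := (mul_eq_zero.mp this).resolve_right hy
        simpa using this
      exact hz (by funext p; fin_cases p <;> simp [prodVec, h, h1', h2'])
    · intro h
      by_contra hx
      have h1' : y 0 = 0 := by
        have e := eq3; rw [h] at e; simp only [mul_zero, zero_mul] at e
        rcases mul_eq_zero.mp e.symm with h' | h'
        · exact absurd h' hb0
        · rcases mul_eq_zero.mp h' with h'' | h''
          · exact absurd (by simpa using h'') hx
          · exact h''
      have h2' : y 1 = 0 := by
        have e := eq2; rw [h] at e; simp only [mul_zero, zero_mul] at e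
        rcases mul_eq_zero.mp e with h' | h'
        · exact absurd (by simpa using h') hx
        · exact h'
      exact hz (by funext p; fin_cases p <;> simp [prodVec, h, h1', h2'])
  -- some coordinate pair vanishes
  have hW : (x 0 = 0 ∧ y 0 = 0) ∨ (x 1 = 0 ∧ y 1 = 0) ∨ (x 2 = 0 ∧ y 2 = 0) := by
    have hb3 : ((1:ℂ) - (b:ℂ)^3) ≠ 0 := by
      intro h
      have hr : ((1 - b^3 : ℝ) : ℂ) = 0 := by push_cast; linear_combination h
      have h0 : (1 - b^3 : ℝ) = 0 := Complex.ofReal_eq_zero.mp hr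
      exact hb1 (by nlinarith [sq_nonneg (b-1), sq_nonneg (b+1)])
    have hprod : ((1:ℂ) - (b:ℂ)^3) * (cj (x 0) * cj (x 1) * cj (x 2) * (y 0 * y 1 * y 2)) = 0 := by
      linear_combination (cj (x 2) * y 1 * (cj (x 0) * y 2)) * eq1
        + ((b:ℂ) * (cj (x 0) * y 1) * (cj (x 0) * y 2)) * eq2
        + ((b:ℂ) * (cj (x 0) * y 1) * ((b:ℂ) * (cj (x 1) * y 2))) * eq3
    have hW0 := (mul_eq_zero.mp hprod).resolve_left hb3
    rcases mul_eq_zero.mp hW0 with hx | hy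
    · rcases mul_eq_zero.mp hx with hx' | h2'
      · rcases mul_eq_zero.mp hx' with h0' | h1'
        · exact Or.inl ⟨by simpa using h0', hiff0.mp (by simpa using h0')⟩
        · exact Or.inr (Or.inl ⟨by simpa using h1', hiff1.mp (by simpa using h1')⟩)
      · exact Or.inr (Or.inr ⟨by simpa using h2', hiff2.mp (by simpa using h2')⟩)
    · rcases mul_eq_zero.mp hy with hy' | h2'
      · rcases mul_eq_zero.mp hy' with h0' | h1'
        · exact Or.inl ⟨hiff0.mpr h0', h0'⟩
        · exact Or.inr (Or.inl ⟨hiff1.mpr h1', h1'⟩)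
      · exact Or.inr (Or.inr ⟨hiff2.mpr h2', h2'⟩)
  constructor
  · -- forward direction
    intro hp
    have hE := pairing_formula' b hb x y
    rw [hp, mul_zero] at hE
    replace hE := hE.symm
    simp only [_root_.map_mul] at hE
    rcases hW with ⟨hx0, hy0⟩ | ⟨hx1, hy1⟩ | ⟨hx2, hy2⟩
    · -- case 0 : x 0 = y 0 = 0  (form 1)
      by_cases hx1 : x 1 = 0
      · have hy1 : y 1 = 0 := hiff1.mp hx1
        exfalso
        have hx2 : x 2 ≠ 0 := by
          intro h; exact hz (by funext p; fin_cases p <;> simp [prodVec, hx0, hx1, h])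
        have hy2 : y 2 ≠ 0 := by
          intro h; exact hz (by funext p; fin_cases p <;> simp [prodVec, hy0, hy1, h])
        rw [hx0, hy0, hx1, hy1] at hE
        simp only [map_zero, zero_mul, mul_zero, add_zero, zero_add, sub_zero, zero_sub, neg_zero] at hE
        have hcontra : ((b:ℂ)-1)^2 * (x 2 * y 2 * (cj (x 2) * cj (y 2))) = 0 := by
          linear_combination hE
        rcases mul_eq_zero.mp hcontra with h | h
        · exact pow_ne_zero 2 hb1c h
        · rcases mul_eq_zero.mp h with h' | h'
          · exact mul_ne_zero hx2 hy2 h'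
          · exact mul_ne_zero (conj_ne_zero' hx2) (conj_ne_zero' hy2) h'
      · have hy1 : y 1 ≠ 0 := fun h => hx1 (hiff1.mpr h)
        by_cases hx2 : x 2 = 0
        · have hy2 : y 2 = 0 := hiff2.mp hx2
          exfalso
          rw [hx0, hy0, hx2, hy2] at hE
          simp only [map_zero, zero_mul, mul_zero, add_zero, zero_add, sub_zero, zero_sub, neg_zero] at hE
          have hcontra : ((b:ℂ)-1)^2 * (x 1 * y 1 * (cj (x 1) * cj (y 1))) = 0 := by
            linear_combination hE
          rcases mul_eq_zero.mp hcontra with h | h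
          · exact pow_ne_zero 2 hb1c h
          · rcases mul_eq_zero.mp h with h' | h'
            · exact mul_ne_zero hx1 hy1 h'
            · exact mul_ne_zero (conj_ne_zero' hx1) (conj_ne_zero' hy1) h'
        · have hy2 : y 2 ≠ 0 := fun h => hx2 (hiff2.mpr h)
          have m2l : (x 2 * cj (x 2)) * (y 1 * cj (y 1))
              = (b:ℂ)^2 * ((x 1 * cj (x 1)) * (y 2 * cj (y 2))) := by
            linear_combination (x 2 * cj (y 1)) * eq2 + ((b:ℂ) * (cj (x 1) * y 2)) * ceq2
          have crossl : (x 1 * y 1) * (cj (x 2) * cj (y 2))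
              = (b:ℂ) * ((x 1 * cj (x 1)) * (y 2 * cj (y 2))) := by
            linear_combination (x 1 * cj (y 2)) * eq2
          have ccrossl : (x 2 * y 2) * (cj (x 1) * cj (y 1))
              = (b:ℂ) * ((x 1 * cj (x 1)) * (y 2 * cj (y 2))) := by
            linear_combination (cj (x 1) * y 2) * ceq2
          rw [hx0, hy0] at hE
          simp only [map_zero, zero_mul, mul_zero, add_zero, zero_add, sub_zero, zero_sub, neg_zero] at hE
          have key : ((b:ℂ)-1)^2 * ((x 1 * cj (x 1)) * ((y 1 * cj (y 1)) - (b:ℂ) * (y 2 * cj (y 2)))^2) = 0 := by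
            linear_combination (y 1 * cj (y 1)) * hE
              - (((b:ℂ)-1)^2 * (y 2 * cj (y 2)) + y 1 * cj (y 1)) * m2l
              + ((b:ℂ)^2 - b + 1) * (y 1 * cj (y 1)) * crossl
              + ((b:ℂ)^2 - b + 1) * (y 1 * cj (y 1)) * ccrossl
          have hdiff : y 1 * cj (y 1) = (b:ℂ) * (y 2 * cj (y 2)) := by
            rcases mul_eq_zero.mp key with h | h
            · exact absurd h (pow_ne_zero 2 hb1c)
            · rcases mul_eq_zero.mp h with h' | h'
              · exact absurd h' (mul_ne_zero hx1 (conj_ne_zero' hx1))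
              · exact sub_eq_zero.mp (pow_eq_zero_iff two_ne_zero |>.mp h')
          have hcond : ‖y 1‖ ^ 2 = b * ‖y 2‖ ^ 2 := by
            have h' := hdiff
            rw [Complex.mul_conj, Complex.mul_conj] at h'
            rw [Complex.sq_norm, Complex.sq_norm]
            exact_mod_cast h'
          refine ⟨x 1 / cj (y 1), div_ne_zero hx1 (conj_ne_zero' hy1), Or.inl ⟨y 1, y 2, ?_, hcond⟩⟩
          funext p
          fin_cases p
          · simp [prodVec, hx0]
          · simp [prodVec, hx0]
          · simp [prodVec, hx0]
          · simp [prodVec, hy0]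
          · simp only [prodVec, Pi.smul_apply, smul_eq_mul, Complex.star_def]
            simp
            rw [div_mul_eq_mul_div, eq_div_iff (conj_ne_zero' hy1)]
            ring
          · simp only [prodVec, Pi.smul_apply, smul_eq_mul, Complex.star_def]
            simp
            rw [div_mul_eq_mul_div, eq_div_iff (conj_ne_zero' hy1)]
            ring
          · simp [prodVec, hy0]
          · simp only [prodVec, Pi.smul_apply, smul_eq_mul, Complex.star_def]
            simp
            rw [div_mul_eq_mul_div, eq_div_iff (conj_ne_zero' hy1)]
            linear_combination (y 1) * ceq2
          · simp only [prodVec, Pi.smul_apply, smul_eq_mul, Complex.star_def]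
            simp
            rw [div_mul_eq_mul_div, eq_div_iff (conj_ne_zero' hy1)]
            linear_combination (y 2) * ceq2
    · -- case 1 : x 1 = y 1 = 0  (form 2)
      by_cases hx2 : x 2 = 0
      · have hy2 : y 2 = 0 := hiff2.mp hx2
        exfalso
        have hx0 : x 0 ≠ 0 := by
          intro h; exact hz (by funext p; fin_cases p <;> simp [prodVec, hx1, hx2, h])
        have hy0 : y 0 ≠ 0 := by
          intro h; exact hz (by funext p; fin_cases p <;> simp [prodVec, hy1, hy2, h])
        rw [hx1, hy1, hx2, hy2] at hE
        simp only [map_zero, zero_mul, mul_zero, add_zero, zero_add, sub_zero, zero_sub, neg_zero] at hE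
        have hcontra : ((b:ℂ)-1)^2 * (x 0 * y 0 * (cj (x 0) * cj (y 0))) = 0 := by
          linear_combination hE
        rcases mul_eq_zero.mp hcontra with h | h
        · exact pow_ne_zero 2 hb1c h
        · rcases mul_eq_zero.mp h with h' | h'
          · exact mul_ne_zero hx0 hy0 h'
          · exact mul_ne_zero (conj_ne_zero' hx0) (conj_ne_zero' hy0) h'
      · have hy2 : y 2 ≠ 0 := fun h => hx2 (hiff2.mpr h)
        by_cases hx0 : x 0 = 0
        · have hy0 : y 0 = 0 := hiff0.mp hx0
          exfalso
          rw [hx1, hy1, hx0, hy0] at hE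
          simp only [map_zero, zero_mul, mul_zero, add_zero, zero_add, sub_zero, zero_sub, neg_zero] at hE
          have hcontra : ((b:ℂ)-1)^2 * (x 2 * y 2 * (cj (x 2) * cj (y 2))) = 0 := by
            linear_combination hE
          rcases mul_eq_zero.mp hcontra with h | h
          · exact pow_ne_zero 2 hb1c h
          · rcases mul_eq_zero.mp h with h' | h'
            · exact mul_ne_zero hx2 hy2 h'
            · exact mul_ne_zero (conj_ne_zero' hx2) (conj_ne_zero' hy2) h'
        · have hy0 : y 0 ≠ 0 := fun h => hx0 (hiff0.mpr h)
          have m2l : (x 0 * cj (x 0)) * (y 2 * cj (y 2))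
              = (b:ℂ)^2 * ((x 2 * cj (x 2)) * (y 0 * cj (y 0))) := by
            linear_combination (x 0 * cj (y 2)) * eq3 + ((b:ℂ) * (cj (x 2) * y 0)) * ceq3
          have crossl : (x 2 * y 2) * (cj (x 0) * cj (y 0))
              = (b:ℂ) * ((x 2 * cj (x 2)) * (y 0 * cj (y 0))) := by
            linear_combination (x 2 * cj (y 0)) * eq3
          have ccrossl : (x 0 * y 0) * (cj (x 2) * cj (y 2))
              = (b:ℂ) * ((x 2 * cj (x 2)) * (y 0 * cj (y 0))) := by
            linear_combination (cj (x 2) * y 0) * ceq3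
          rw [hx1, hy1] at hE
          simp only [map_zero, zero_mul, mul_zero, add_zero, zero_add, sub_zero, zero_sub, neg_zero] at hE
          have key : ((b:ℂ)-1)^2 * ((x 2 * cj (x 2)) * ((y 2 * cj (y 2)) - (b:ℂ) * (y 0 * cj (y 0)))^2) = 0 := by
            linear_combination (y 2 * cj (y 2)) * hE
              - (((b:ℂ)-1)^2 * (y 0 * cj (y 0)) + y 2 * cj (y 2)) * m2l
              + ((b:ℂ)^2 - b + 1) * (y 2 * cj (y 2)) * crossl
              + ((b:ℂ)^2 - b + 1) * (y 2 * cj (y 2)) * ccrossl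
          have hdiff : y 2 * cj (y 2) = (b:ℂ) * (y 0 * cj (y 0)) := by
            rcases mul_eq_zero.mp key with h | h
            · exact absurd h (pow_ne_zero 2 hb1c)
            · rcases mul_eq_zero.mp h with h' | h'
              · exact absurd h' (mul_ne_zero hx2 (conj_ne_zero' hx2))
              · exact sub_eq_zero.mp (pow_eq_zero_iff two_ne_zero |>.mp h')
          have hcond : ‖y 2‖ ^ 2 = b * ‖y 0‖ ^ 2 := by
            have h' := hdiff
            rw [Complex.mul_conj, Complex.mul_conj] at h'
            rw [Complex.sq_norm, Complex.sq_norm]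
            exact_mod_cast h'
          refine ⟨x 2 / cj (y 2), div_ne_zero hx2 (conj_ne_zero' hy2), Or.inr (Or.inl ⟨y 0, y 2, ?_, hcond⟩)⟩
          funext p
          fin_cases p
          · simp only [prodVec, Pi.smul_apply, smul_eq_mul, Complex.star_def]
            simp
            rw [div_mul_eq_mul_div, eq_div_iff (conj_ne_zero' hy2)]
            linear_combination (y 0) * ceq3
          · simp [prodVec, hy1]
          · simp only [prodVec, Pi.smul_apply, smul_eq_mul, Complex.star_def]
            simp
            rw [div_mul_eq_mul_div, eq_div_iff (conj_ne_zero' hy2)]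
            linear_combination (y 2) * ceq3
          · simp [prodVec, hx1]
          · simp [prodVec, hx1]
          · simp [prodVec, hx1]
          · simp only [prodVec, Pi.smul_apply, smul_eq_mul, Complex.star_def]
            simp
            rw [div_mul_eq_mul_div, eq_div_iff (conj_ne_zero' hy2)]
            ring
          · simp [prodVec, hy1]
          · simp only [prodVec, Pi.smul_apply, smul_eq_mul, Complex.star_def]
            simp
            rw [div_mul_eq_mul_div, eq_div_iff (conj_ne_zero' hy2)]
            ring
    · -- case 2 : x 2 = y 2 = 0  (form 3)
      by_cases hx0 : x 0 = 0
      · have hy0 : y 0 = 0 := hiff0.mp hx0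
        exfalso
        have hx1 : x 1 ≠ 0 := by
          intro h; exact hz (by funext p; fin_cases p <;> simp [prodVec, hx2, hx0, h])
        have hy1 : y 1 ≠ 0 := by
          intro h; exact hz (by funext p; fin_cases p <;> simp [prodVec, hy2, hy0, h])
        rw [hx2, hy2, hx0, hy0] at hE
        simp only [map_zero, zero_mul, mul_zero, add_zero, zero_add, sub_zero, zero_sub, neg_zero] at hE
        have hcontra : ((b:ℂ)-1)^2 * (x 1 * y 1 * (cj (x 1) * cj (y 1))) = 0 := by
          linear_combination hE
        rcases mul_eq_zero.mp hcontra with h | h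
        · exact pow_ne_zero 2 hb1c h
        · rcases mul_eq_zero.mp h with h' | h'
          · exact mul_ne_zero hx1 hy1 h'
          · exact mul_ne_zero (conj_ne_zero' hx1) (conj_ne_zero' hy1) h'
      · have hy0 : y 0 ≠ 0 := fun h => hx0 (hiff0.mpr h)
        by_cases hx1 : x 1 = 0
        · have hy1 : y 1 = 0 := hiff1.mp hx1
          exfalso
          rw [hx2, hy2, hx1, hy1] at hE
          simp only [map_zero, zero_mul, mul_zero, add_zero, zero_add, sub_zero, zero_sub, neg_zero] at hE
          have hcontra : ((b:ℂ)-1)^2 * (x 0 * y 0 * (cj (x 0) * cj (y 0))) = 0 := by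
            linear_combination hE
          rcases mul_eq_zero.mp hcontra with h | h
          · exact pow_ne_zero 2 hb1c h
          · rcases mul_eq_zero.mp h with h' | h'
            · exact mul_ne_zero hx0 hy0 h'
            · exact mul_ne_zero (conj_ne_zero' hx0) (conj_ne_zero' hy0) h'
        · have hy1 : y 1 ≠ 0 := fun h => hx1 (hiff1.mpr h)
          have m2l : (x 1 * cj (x 1)) * (y 0 * cj (y 0))
              = (b:ℂ)^2 * ((x 0 * cj (x 0)) * (y 1 * cj (y 1))) := by
            linear_combination (x 1 * cj (y 0)) * eq1 + ((b:ℂ) * (cj (x 0) * y 1)) * ceq1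
          have crossl : (x 0 * y 0) * (cj (x 1) * cj (y 1))
              = (b:ℂ) * ((x 0 * cj (x 0)) * (y 1 * cj (y 1))) := by
            linear_combination (x 0 * cj (y 1)) * eq1
          have ccrossl : (x 1 * y 1) * (cj (x 0) * cj (y 0))
              = (b:ℂ) * ((x 0 * cj (x 0)) * (y 1 * cj (y 1))) := by
            linear_combination (cj (x 0) * y 1) * ceq1
          rw [hx2, hy2] at hE
          simp only [map_zero, zero_mul, mul_zero, add_zero, zero_add, sub_zero, zero_sub, neg_zero] at hE
          have key : ((b:ℂ)-1)^2 * ((x 0 * cj (x 0)) * ((y 0 * cj (y 0)) - (b:ℂ) * (y 1 * cj (y 1)))^2) = 0 := by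
            linear_combination (y 0 * cj (y 0)) * hE
              - (((b:ℂ)-1)^2 * (y 1 * cj (y 1)) + y 0 * cj (y 0)) * m2l
              + ((b:ℂ)^2 - b + 1) * (y 0 * cj (y 0)) * crossl
              + ((b:ℂ)^2 - b + 1) * (y 0 * cj (y 0)) * ccrossl
          have hdiff : y 0 * cj (y 0) = (b:ℂ) * (y 1 * cj (y 1)) := by
            rcases mul_eq_zero.mp key with h | h
            · exact absurd h (pow_ne_zero 2 hb1c)
            · rcases mul_eq_zero.mp h with h' | h'
              · exact absurd h' (mul_ne_zero hx0 (conj_ne_zero' hx0))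
              · exact sub_eq_zero.mp (pow_eq_zero_iff two_ne_zero |>.mp h')
          have hcond : ‖y 0‖ ^ 2 = b * ‖y 1‖ ^ 2 := by
            have h' := hdiff
            rw [Complex.mul_conj, Complex.mul_conj] at h'
            rw [Complex.sq_norm, Complex.sq_norm]
            exact_mod_cast h'
          refine ⟨x 0 / cj (y 0), div_ne_zero hx0 (conj_ne_zero' hy0), Or.inr (Or.inr ⟨y 0, y 1, ?_, hcond⟩)⟩
          funext p
          fin_cases p
          · simp only [prodVec, Pi.smul_apply, smul_eq_mul, Complex.star_def]
            simp
            rw [div_mul_eq_mul_div, eq_div_iff (conj_ne_zero' hy0)]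
            ring
          · simp only [prodVec, Pi.smul_apply, smul_eq_mul, Complex.star_def]
            simp
            rw [div_mul_eq_mul_div, eq_div_iff (conj_ne_zero' hy0)]
            ring
          · simp [prodVec, hy2]
          · simp only [prodVec, Pi.smul_apply, smul_eq_mul, Complex.star_def]
            simp
            rw [div_mul_eq_mul_div, eq_div_iff (conj_ne_zero' hy0)]
            linear_combination (y 0) * ceq1
          · simp only [prodVec, Pi.smul_apply, smul_eq_mul, Complex.star_def]
            simp
            rw [div_mul_eq_mul_div, eq_div_iff (conj_ne_zero' hy0)]
            linear_combination (y 1) * ceq1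
          · simp [prodVec, hy2]
          · simp [prodVec, hx2]
          · simp [prodVec, hx2]
          · simp [prodVec, hx2]
  · -- backward direction
    rintro ⟨c, hc0, hf⟩
    have hS : ((b:ℂ)^2 - b + 1) * pairing (rankOne (prodVec x y)) (PhiT (1/b)) = 0 := by
      rcases hf with ⟨w2, w3, hEq, hcond⟩ | ⟨w1, w3, hEq, hcond⟩ | ⟨w1, w2, hEq, hcond⟩
      · have hef : w2 * cj w2 = (b:ℂ) * (w3 * cj w3) := by
          rw [Complex.mul_conj, Complex.mul_conj]
          rw [← Complex.ofReal_mul]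
          norm_cast
          rw [← Complex.sq_norm, ← Complex.sq_norm]
          exact hcond
        rw [hEq, smul_prodVec, pairing_formula' b hb]
        simp only [_root_.map_mul, Complex.star_def, Complex.conj_conj, Complex.conj_ofReal]
        simp
        linear_combination ((c * cj c) * ((b:ℂ)-1)^2 * (w2 * cj w2 - (b:ℂ) * (w3 * cj w3))) * hef
      · have hef : w3 * cj w3 = (b:ℂ) * (w1 * cj w1) := by
          rw [Complex.mul_conj, Complex.mul_conj]
          rw [← Complex.ofReal_mul]
          norm_cast
          rw [← Complex.sq_norm, ← Complex.sq_norm]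
          exact hcond
        rw [hEq, smul_prodVec, pairing_formula' b hb]
        simp only [_root_.map_mul, Complex.star_def, Complex.conj_conj, Complex.conj_ofReal]
        simp
        linear_combination ((c * cj c) * ((b:ℂ)-1)^2 * (w3 * cj w3 - (b:ℂ) * (w1 * cj w1))) * hef
      · have hef : w1 * cj w1 = (b:ℂ) * (w2 * cj w2) := by
          rw [Complex.mul_conj, Complex.mul_conj]
          rw [← Complex.ofReal_mul]
          norm_cast
          rw [← Complex.sq_norm, ← Complex.sq_norm]
          exact hcond
        rw [hEq, smul_prodVec, pairing_formula' b hb]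
        simp only [_root_.map_mul, Complex.star_def, Complex.conj_conj, Complex.conj_ofReal]
        simp
        linear_combination ((c * cj c) * ((b:ℂ)-1)^2 * (w1 * cj w1 - (b:ℂ) * (w2 * cj w2))) * hef
    exact (mul_eq_zero.mp hS).resolve_left hD0
end
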